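/- Let X be a real random variable such that lim_{x→∞} x² P(|X| > x) = C for some constant C ∈ (0, ∞). Then there exists a constant C' > 0 such that E[ X² · 1{|X| < x} ] ≤ 1 + C' max(log x, 0) for all x > 0. -/

import Mathlib

set_option maxHeartbeats 1000000

open MeasureTheory ProbabilityTheory Filter

/-- Truncated-second-moment bound for a regularly varying tail of index `−2`:
if `x² P(|X| > x) → C ∈ (0,∞)` as `x → ∞`, then there is `C' > 0` with
`E[X² 1{|X| < x}] ≤ 1 + C' max(log x, 0)` for all `x > 0`. -/
theorem truncated_second_moment_log_bound
    {Ω : Type*} [MeasureSpace Ω] [IsProbabilityMeasure (ℙ : Measure Ω)]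
    (X : Ω → ℝ) (hX : Measurable X) (C : ℝ) (hC : 0 < C)
    (htail : Tendsto (fun x : ℝ => x ^ 2 * (ℙ {ω : Ω | |X ω| > x}).toReal) atTop (nhds C)) :
    ∃ C' : ℝ, 0 < C' ∧ ∀ x : ℝ, 0 < x →
      (∫ ω, (if |X ω| < x then (X ω) ^ 2 else 0) ∂ℙ) ≤ 1 + C' * max (Real.log x) 0 := by
  set f : ℝ → ℝ := fun x => ∫ ω, (if |X ω| < x then (X ω) ^ 2 else 0) ∂ℙ with hfdef
  have hmeas : ∀ x : ℝ, MeasurableSet {ω : Ω | |X ω| < x} := fun x =>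
    measurableSet_lt hX.abs measurable_const
  have hmeas' : ∀ x : ℝ, MeasurableSet {ω : Ω | x ≤ |X ω|} := fun x =>
    measurableSet_le measurable_const hX.abs
  have hint : ∀ x : ℝ, Integrable (fun ω => if |X ω| < x then (X ω) ^ 2 else 0) ℙ := by
    intro x
    refine (integrable_const (max (x ^ 2) 0)).mono' ?_ ?_
    · exact (Measurable.ite (hmeas x) (hX.pow_const 2) measurable_const).aestronglyMeasurable
    · refine Filter.Eventually.of_forall fun ω => ?_
      by_cases h : |X ω| < x
      · simp only [h, if_true, Real.norm_eq_abs, abs_of_nonneg (sq_nonneg (X ω))]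
        refine le_max_of_le_left ?_
        have h1 : (X ω) ^ 2 = |X ω| ^ 2 := (sq_abs _).symm
        nlinarith [abs_nonneg (X ω)]
      · simp [h]
  -- monotonicity of f
  have hmono : ∀ a b : ℝ, a ≤ b → f a ≤ f b := by
    intro a b hab
    refine integral_mono (hint a) (hint b) fun ω => ?_
    by_cases ha : |X ω| < a
    · simp [ha, lt_of_lt_of_le ha hab]
    · by_cases hb : |X ω| < b <;> simp [ha, hb, sq_nonneg]
  -- shell bound
  have hshell : ∀ a b : ℝ, f b ≤ f a + b ^ 2 * (ℙ {ω | a ≤ |X ω|}).toReal := by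
    intro a b
    have hintInd : Integrable ({ω : Ω | a ≤ |X ω|}.indicator fun _ => b ^ 2) ℙ :=
      (integrable_const (b ^ 2)).indicator (hmeas' a)
    have key : f b ≤ ∫ ω, ((if |X ω| < a then (X ω) ^ 2 else 0)
        + {ω : Ω | a ≤ |X ω|}.indicator (fun _ => b ^ 2) ω) ∂ℙ := by
      refine integral_mono (hint b) ((hint a).add hintInd) fun ω => ?_
      by_cases hb : |X ω| < b
      · by_cases ha : |X ω| < a
        · have : ω ∉ {ω : Ω | a ≤ |X ω|} := by simpa using not_le.2 ha
          simp [hb, ha, Set.indicator_of_notMem this]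
        · have hmem : ω ∈ {ω : Ω | a ≤ |X ω|} := not_lt.1 ha
          have hx2 : (X ω) ^ 2 ≤ b ^ 2 := by
            have h1 : (X ω) ^ 2 = |X ω| ^ 2 := (sq_abs _).symm
            nlinarith [abs_nonneg (X ω)]
          simpa [hb, ha, Set.indicator_of_mem hmem] using hx2
      · have h0 : (0:ℝ) ≤ (if |X ω| < a then (X ω) ^ 2 else 0) := by
          by_cases ha : |X ω| < a <;> simp [ha, sq_nonneg]
        have h1 : (0:ℝ) ≤ {ω : Ω | a ≤ |X ω|}.indicator (fun _ => b ^ 2) ω := by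
          by_cases hm : ω ∈ {ω : Ω | a ≤ |X ω|} <;>
            simp [hm, Set.indicator_of_mem, Set.indicator_of_notMem, sq_nonneg]
        simp only [hb, if_false]
        linarith
    rw [integral_add (hint a) hintInd, integral_indicator_const _ (hmeas' a)] at key
    simpa [smul_eq_mul, mul_comm, measureReal_def] using key
  -- f 1 ≤ P(|X| < 1)
  have hf1 : f 1 ≤ (ℙ {ω : Ω | |X ω| < 1}).toReal := by
    have key : f 1 ≤ ∫ ω, ({ω : Ω | |X ω| < 1}.indicator (fun _ => (1:ℝ)) ω) ∂ℙ := by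
      refine integral_mono (hint 1) ((integrable_const 1).indicator (hmeas 1)) fun ω => ?_
      by_cases h : |X ω| < 1
      · have hmem : ω ∈ {ω : Ω | |X ω| < 1} := h
        have h1 : (X ω) ^ 2 = |X ω| ^ 2 := (sq_abs _).symm
        have : (X ω) ^ 2 ≤ 1 := by nlinarith [abs_nonneg (X ω)]
        simpa [h, Set.indicator_of_mem hmem] using this
      · simp [h, Set.indicator_nonneg, Set.indicator]
        try intro h'
        try exact zero_le_one
    rwa [integral_indicator_const _ (hmeas 1), smul_eq_mul, mul_one] at key
  -- complement relation
  have hcompl : (ℙ {ω : Ω | |X ω| < 1}).toReal = 1 - (ℙ {ω : Ω | 1 ≤ |X ω|}).toReal := by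
    have hset : {ω : Ω | |X ω| < 1} = {ω : Ω | 1 ≤ |X ω|}ᶜ := by
      ext ω; simp [not_le]
    rw [hset, measure_compl (hmeas' 1) (measure_ne_top _ _), measure_univ,
      ENNReal.toReal_sub_of_le prob_le_one ENNReal.one_ne_top, ENNReal.toReal_one]
  have hp0 : (0:ℝ) ≤ (ℙ {ω : Ω | 1 ≤ |X ω|}).toReal := ENNReal.toReal_nonneg
  have hp1 : (ℙ {ω : Ω | 1 ≤ |X ω|}).toReal ≤ 1 := by
    have := ENNReal.toReal_mono ENNReal.one_ne_top (prob_le_one (μ := ℙ) (s := {ω : Ω | 1 ≤ |X ω|}))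
    simpa using this
  have hf1le : f 1 ≤ 1 := by
    rw [hcompl] at hf1; linarith
  -- tail bound
  obtain ⟨x₀, hx₀⟩ := Filter.eventually_atTop.1 (htail.eventually_lt_const (lt_add_one C))
  set M : ℝ := max (C + 1) ((max x₀ 1) ^ 2) with hMdef
  have hM0 : 0 < M := lt_of_lt_of_le (by linarith) (le_max_left _ _)
  have htb : ∀ t : ℝ, 1 ≤ t → (ℙ {ω : Ω | t ≤ |X ω|}).toReal ≤ 4 * M / t ^ 2 := by
    intro t ht
    have ht0 : (0:ℝ) < t := by linarith
    have hsub : {ω : Ω | t ≤ |X ω|} ⊆ {ω : Ω | |X ω| > t / 2} := by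
      intro ω h
      simp only [Set.mem_setOf_eq] at h ⊢
      linarith
    have hm : (ℙ {ω : Ω | t ≤ |X ω|}).toReal ≤ (ℙ {ω : Ω | |X ω| > t / 2}).toReal :=
      ENNReal.toReal_mono (measure_ne_top _ _) (measure_mono hsub)
    rw [le_div_iff₀ (by positivity : (0:ℝ) < t ^ 2)]
    rcases le_or_gt x₀ (t / 2) with hc | hc
    · have := hx₀ (t / 2) hc
      have hCM : C + 1 ≤ M := le_max_left _ _
      nlinarith [ENNReal.toReal_nonneg (a := ℙ {ω : Ω | t ≤ |X ω|})]
    · have htle : t ≤ 2 * max x₀ 1 := by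
        have : x₀ ≤ max x₀ 1 := le_max_left _ _
        linarith
      have hPle : (ℙ {ω : Ω | t ≤ |X ω|}).toReal ≤ 1 := by
        have := ENNReal.toReal_mono ENNReal.one_ne_top
          (prob_le_one (μ := ℙ) (s := {ω : Ω | t ≤ |X ω|}))
        simpa using this
      have hM2 : (max x₀ 1) ^ 2 ≤ M := le_max_right _ _
      nlinarith [ENNReal.toReal_nonneg (a := ℙ {ω : Ω | t ≤ |X ω|}), le_max_right x₀ 1]
  -- induction along powers of e
  set K : ℝ := 4 * M * (Real.exp 1) ^ 2 with hKdef
  have hK0 : 0 < K := by positivity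
  have hind : ∀ n : ℕ, f (Real.exp n) ≤ 1 + n * K := by
    intro n
    induction n with
    | zero => simpa using hf1le
    | succ n ih =>
      have h1e : (1:ℝ) ≤ Real.exp n := Real.one_le_exp (by positivity)
      have hstep := hshell (Real.exp n) (Real.exp ((n:ℕ)+1 : ℕ))
      have htail' := htb (Real.exp n) h1e
      have hexp : (Real.exp (((n:ℕ)+1 : ℕ) : ℝ)) ^ 2 = (Real.exp n) ^ 2 * (Real.exp 1) ^ 2 := by
        push_cast
        rw [Real.exp_add]
        ring
      have hPnn : (0:ℝ) ≤ (ℙ {ω : Ω | Real.exp n ≤ |X ω|}).toReal := ENNReal.toReal_nonneg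
      have hterm : (Real.exp (((n:ℕ)+1 : ℕ) : ℝ)) ^ 2 * (ℙ {ω : Ω | Real.exp n ≤ |X ω|}).toReal ≤ K := by
        rw [hexp]
        have hepos : (0:ℝ) < (Real.exp n) ^ 2 := by positivity
        calc (Real.exp n) ^ 2 * (Real.exp 1) ^ 2 * (ℙ {ω : Ω | Real.exp n ≤ |X ω|}).toReal
            ≤ (Real.exp n) ^ 2 * (Real.exp 1) ^ 2 * (4 * M / (Real.exp n) ^ 2) := by
              have h2 : (0:ℝ) ≤ (Real.exp n) ^ 2 * (Real.exp 1) ^ 2 := by positivity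
              exact mul_le_mul_of_nonneg_left htail' h2
          _ = K := by
              rw [hKdef]
              field_simp
      push_cast at hstep hterm ⊢
      linarith
  -- the constant
  set E : ℝ := Real.exp 1 with hEdef
  have hE : (2:ℝ) < E := by
    have := Real.add_one_le_exp 1
    have h2 : Real.exp 1 ≠ 2 := by
      intro h
      have := Real.exp_one_gt_d9
      rw [h] at this; norm_num at this
    rcases lt_or_eq_of_le (by linarith : (2:ℝ) ≤ Real.exp 1) with h | h
    · exact h
    · exact absurd h.symm h2
  clear_value f M K E
  refine ⟨2 * K + E * (E + 1), by positivity, fun x hx => ?_⟩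
  have hrw : (∫ ω, (if |X ω| < x then (X ω) ^ 2 else 0) ∂ℙ) = f x := by rw [hfdef]
  rw [hrw]
  rcases le_or_gt x 1 with hx1 | hx1
  · -- x ≤ 1
    have h1 : f x ≤ 1 := le_trans (hmono x 1 hx1) hf1le
    have h2 : (0:ℝ) ≤ max (Real.log x) 0 := le_max_right _ _
    have h3 : (0:ℝ) ≤ 2 * K + E * (E + 1) := by positivity
    nlinarith [mul_nonneg h3 h2]
  · have hlog : 0 < Real.log x := Real.log_pos hx1
    rw [max_eq_left hlog.le]
    rcases le_or_gt x E with hxe | hxe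
    · -- 1 < x ≤ e
      have hs := hshell 1 x
      set p : ℝ := (ℙ {ω : Ω | 1 ≤ |X ω|}).toReal with hpdef
      clear_value p
      clear hrw hfdef hint hmeas hmeas' htail hx₀ htb hind hshell hmono hf1le hpdef hMdef hKdef hX
      have hfb : f x ≤ 1 + (x ^ 2 - 1) * p := by
        rw [hcompl] at hf1
        nlinarith
      -- log lower bound: 1 - 1/x ≤ log x
      have hlb : 1 - 1 / x ≤ Real.log x := by
        have h := Real.add_one_le_exp (-Real.log x)
        rw [Real.exp_neg, Real.exp_log hx] at h
        have : x⁻¹ = 1 / x := (one_div x).symm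
        linarith [h, this ▸ h]
      have hx1' : (x - 1) ≤ x * Real.log x := by
        have hx0 : (0:ℝ) < x := hx
        have := mul_le_mul_of_nonneg_left hlb hx0.le
        rw [mul_sub, mul_one_div, div_self hx0.ne'] at this
        linarith
      have hh1 : x ^ 2 - 1 ≤ (x + 1) * (x * Real.log x) := by
        nlinarith [mul_le_mul_of_nonneg_left hx1' (by linarith : (0:ℝ) ≤ x + 1)]
      have hh2 : (x + 1) * x ≤ (E + 1) * E := by
        have : x * x ≤ E * E := mul_le_mul hxe hxe (by linarith) (by linarith)
        nlinarith
      have hsq : x ^ 2 - 1 ≤ (E + 1) * (E * Real.log x) := by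
        have := mul_le_mul_of_nonneg_right hh2 hlog.le
        nlinarith
      have hxx : (0:ℝ) ≤ x ^ 2 - 1 := by nlinarith
      have h3 : (x ^ 2 - 1) * p ≤ x ^ 2 - 1 := by
        nlinarith [mul_nonneg hxx (sub_nonneg.2 hp1)]
      have h4 : (0:ℝ) ≤ 2 * K * Real.log x := by positivity
      linarith [hfb, h3, hsq, h4]
    · -- e < x
      clear hrw hfdef hint hmeas hmeas' htail hx₀ htb hshell hf1le hMdef hKdef hX hf1 hcompl
      rw [hEdef] at hxe
      have hlog1 : 1 < Real.log x := (Real.lt_log_iff_exp_lt hx).2 hxe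
      set n : ℕ := ⌈Real.log x⌉₊ with hndef
      have hxn : x ≤ Real.exp n := by
        have h1 : Real.log x ≤ (n:ℝ) := Nat.le_ceil _
        calc x = Real.exp (Real.log x) := (Real.exp_log hx).symm
          _ ≤ Real.exp n := Real.exp_le_exp.2 h1
      have hnle : (n:ℝ) ≤ Real.log x + 1 := (Nat.ceil_lt_add_one hlog.le).le
      have h1 := hmono x (Real.exp n) hxn
      have h2 := hind n
      have : f x ≤ 1 + ((Real.log x) + 1) * K := by
        have : (n:ℝ) * K ≤ (Real.log x + 1) * K :=
          mul_le_mul_of_nonneg_right hnle hK0.le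
        linarith
      have hA : 0 ≤ (Real.log x - 1) * K := mul_nonneg (by linarith) hK0.le
      have hB : 0 ≤ E * (E + 1) * Real.log x := by positivity
      nlinarith [hA, hB]
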